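/- In 𝒰, for all i ≠ j in I and all r ∈ ℕ one has [h_{i,3}, b_{j,r}] = 2(α_i,α_j)·b_{j,r+3}. -/

import Mathlib

noncomputable section

/-- Data of a symmetrizable generalized Cartan matrix `(c_{ij})` (of finite type size bounds)
together with a positive symmetrizer `(d_i)`. -/
structure CartanData (I : Type) [Fintype I] : Type where
  c : I → I → ℤ
  d : I → ℝ
  c_diag : ∀ i, c i i = 2
  c_nonpos : ∀ i j, i ≠ j → c i j ≤ 0
  c_zero_iff : ∀ i j, c i j = 0 ↔ c j i = 0
  c_bound : ∀ i j, i ≠ j → c i j * c j i ≤ 3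
  d_pos : ∀ i, 0 < d i
  d_symm : ∀ i j, d i * (c i j : ℝ) = d j * (c j i : ℝ)

/-- The pairing `(α_i, α_j) = d_i · c_{ij}`. -/
def CartanData.al {I : Type} [Fintype I] (A : CartanData I) (i j : I) : ℝ :=
  A.d i * (A.c i j : ℝ)

/-- Generators for Drinfeld-type presentations: `h i r` stands for `h_{i,2r+1}` and
`b i r` stands for `b_{i,r}`. -/
inductive TYGen (I : Type) : Type
  | h : I → ℕ → TYGen I
  | b : I → ℕ → TYGen I

section Algebras

variable {I : Type} [Fintype I] [DecidableEq I]

/-- The element `h_{i,r}` of the free algebra, for `r : ℤ`, with the conventions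
`h_{i,-1} = 1` and `h_{i,r} = 0` for `r` even or `r < -1`. -/
def TYh (i : I) (r : ℤ) : FreeAlgebra ℂ (TYGen I) :=
  if r = -1 then 1
  else if 0 ≤ r ∧ r % 2 = 1 then FreeAlgebra.ι ℂ (TYGen.h i ((r - 1) / 2).toNat)
  else 0

/-- The generator `b_{i,r}` of the free algebra. -/
def TYb (i : I) (r : ℕ) : FreeAlgebra ℂ (TYGen I) := FreeAlgebra.ι ℂ (TYGen.b i r)

/-- The generator `h_{i,2r+1}` of the free algebra. -/
def TYhodd (i : I) (r : ℕ) : FreeAlgebra ℂ (TYGen I) := FreeAlgebra.ι ℂ (TYGen.h i r)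

/-- The element `h_{i,n}` of the free algebra, `n : ℕ`, with the convention `h_{i,2r} = 0`. -/
def TYhnat (i : I) (n : ℕ) : FreeAlgebra ℂ (TYGen I) :=
  if n % 2 = 1 then FreeAlgebra.ι ℂ (TYGen.h i ((n - 1) / 2)) else 0

/-- Defining relations of the twisted Yangian `ᵢY` in Drinfeld presentation. -/
inductive TYRel (A : CartanData I) : FreeAlgebra ℂ (TYGen I) → FreeAlgebra ℂ (TYGen I) → Prop
  | ty0 (i j : I) (r s : ℤ) : TYRel A ⁅TYh i r, TYh j s⁆ 0
  | ty1 (i j : I) (r s : ℕ) :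
      TYRel A (⁅TYh i ((r : ℤ) + 1), TYb j s⁆ - ⁅TYh i ((r : ℤ) - 1), TYb j (s + 2)⁆)
        ((A.al i j : ℂ) •
            (TYh i ((r : ℤ) - 1) * TYb j (s + 1) + TYb j (s + 1) * TYh i ((r : ℤ) - 1))
          + (((A.al i j : ℂ) ^ 2 / 4) • ⁅TYh i ((r : ℤ) - 1), TYb j s⁆))
  | ty2 (i j : I) (r s : ℕ) :
      TYRel A (⁅TYb i (r + 1), TYb j s⁆ - ⁅TYb i r, TYb j (s + 1)⁆)
        (((A.al i j : ℂ) / 2) • (TYb i r * TYb j s + TYb j s * TYb i r)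
          - (if i = j then (2 : ℂ) * (-1 : ℂ) ^ s else 0) • TYh i ((r : ℤ) + (s : ℤ) + 1))
  | serre0 (i j : I) (hc : A.c i j = 0) : TYRel A ⁅TYb i 0, TYb j 0⁆ 0
  | serre1 (i j : I) (hc : A.c i j = -1) :
      TYRel A ⁅TYb i 0, ⁅TYb i 0, TYb j 0⁆⁆ ((-(A.d i : ℂ)) • TYb j 0)
  | serre2 (i j : I) (hc : A.c i j = -2) :
      TYRel A ⁅TYb i 0, ⁅TYb i 0, ⁅TYb i 0, TYb j 0⁆⁆⁆
        (((-4 : ℂ) * (A.d i : ℂ)) • ⁅TYb i 0, TYb j 0⁆)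
  | serre3 (i j : I) (hc : A.c i j = -3) :
      TYRel A ⁅TYb i 0, ⁅TYb i 0, ⁅TYb i 0, ⁅TYb i 0, TYb j 0⁆⁆⁆⁆
        (((-10 : ℂ) * (A.d i : ℂ)) • ⁅TYb i 0, ⁅TYb i 0, TYb j 0⁆⁆
          + ((-9 : ℂ) * (A.d i : ℂ) ^ 2) • TYb j 0)

/-- The twisted Yangian `ᵢY` in Drinfeld presentation. -/
abbrev TY (A : CartanData I) : Type := RingQuot (TYRel A)

/-- The generator `h_{i,2r+1}` of the twisted Yangian `ᵢY`. -/
def tyH (A : CartanData I) (i : I) (r : ℕ) : TY A :=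
  RingQuot.mkAlgHom ℂ (TYRel A) (TYhodd i r)

/-- The generator `b_{i,r}` of the twisted Yangian `ᵢY`. -/
def tyB (A : CartanData I) (i : I) (r : ℕ) : TY A :=
  RingQuot.mkAlgHom ℂ (TYRel A) (TYb i r)

/-- Defining relations of the algebra `𝔅` (the presentation of `U(g[z]^ω̌)`). -/
inductive BRel (A : CartanData I) : FreeAlgebra ℂ (TYGen I) → FreeAlgebra ℂ (TYGen I) → Prop
  | hh (i j : I) (r s : ℕ) : BRel A ⁅TYhodd i r, TYhodd j s⁆ 0
  | hb (i j : I) (r s : ℕ) :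
      BRel A ⁅TYhodd i r, TYb j s⁆ ((2 * (A.al i j : ℂ)) • TYb j (2 * r + s + 1))
  | bb (i j : I) (r s : ℕ) :
      BRel A (⁅TYb i (r + 1), TYb j s⁆ - ⁅TYb i r, TYb j (s + 1)⁆)
        ((-(if i = j then (-1 : ℂ) ^ r + (-1 : ℂ) ^ s else 0)) • TYhnat i (r + s + 1))
  | serre0 (i j : I) (hc : A.c i j = 0) : BRel A ⁅TYb i 0, TYb j 0⁆ 0
  | serre1 (i j : I) (hc : A.c i j = -1) :
      BRel A ⁅TYb i 0, ⁅TYb i 0, TYb j 0⁆⁆ ((-(A.d i : ℂ)) • TYb j 0)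
  | serre2 (i j : I) (hc : A.c i j = -2) :
      BRel A ⁅TYb i 0, ⁅TYb i 0, ⁅TYb i 0, TYb j 0⁆⁆⁆
        (((-4 : ℂ) * (A.d i : ℂ)) • ⁅TYb i 0, TYb j 0⁆)
  | serre3 (i j : I) (hc : A.c i j = -3) :
      BRel A ⁅TYb i 0, ⁅TYb i 0, ⁅TYb i 0, ⁅TYb i 0, TYb j 0⁆⁆⁆⁆
        (((-10 : ℂ) * (A.d i : ℂ)) • ⁅TYb i 0, ⁅TYb i 0, TYb j 0⁆⁆
          + ((-9 : ℂ) * (A.d i : ℂ) ^ 2) • TYb j 0)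

/-- The algebra `𝔅`. -/
abbrev BAlg (A : CartanData I) : Type := RingQuot (BRel A)

/-- The generator `h_{i,2r+1}` of `𝔅`. -/
def hB (A : CartanData I) (i : I) (r : ℕ) : BAlg A :=
  RingQuot.mkAlgHom ℂ (BRel A) (TYhodd i r)

/-- The generator `b_{i,r}` of `𝔅`. -/
def bB (A : CartanData I) (i : I) (r : ℕ) : BAlg A :=
  RingQuot.mkAlgHom ℂ (BRel A) (TYb i r)

end Algebras

/-- Generators `h_{i,1}`, `b_{i,0}`, `b_{i,1}` for the minimalistic presentations. -/
inductive MinGen (I : Type) : Type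
  | h1 : I → MinGen I
  | b0 : I → MinGen I
  | b1 : I → MinGen I

section MinAlgebras

variable {I : Type} [Fintype I] [DecidableEq I]

/-- The generator `h_{i,1}` of the free algebra. -/
def mh (i : I) : FreeAlgebra ℂ (MinGen I) := FreeAlgebra.ι ℂ (MinGen.h1 i)

/-- The generator `b_{i,0}` of the free algebra. -/
def mb0 (i : I) : FreeAlgebra ℂ (MinGen I) := FreeAlgebra.ι ℂ (MinGen.b0 i)

/-- The generator `b_{i,1}` of the free algebra. -/
def mb1 (i : I) : FreeAlgebra ℂ (MinGen I) := FreeAlgebra.ι ℂ (MinGen.b1 i)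

/-- Defining relations of the minimalistic presentation `ᵢY^min`. -/
inductive MinRel (A : CartanData I) : FreeAlgebra ℂ (MinGen I) → FreeAlgebra ℂ (MinGen I) → Prop
  | hh (i j : I) : MinRel A ⁅mh i, mh j⁆ 0
  | hb (i j : I) : MinRel A ⁅mh i, mb0 j⁆ ((2 * (A.al i j : ℂ)) • mb1 j)
  | bb (i j : I) :
      MinRel A (⁅mb1 i, mb0 j⁆ - ⁅mb0 i, mb1 j⁆)
        (((A.al i j : ℂ) / 2) • (mb0 i * mb0 j + mb0 j * mb0 i)
          - (if i = j then (2 : ℂ) else 0) • mh i)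
  | serre0 (i j : I) (hc : A.c i j = 0) : MinRel A ⁅mb0 i, mb0 j⁆ 0
  | serre1 (i j : I) (hc : A.c i j = -1) :
      MinRel A ⁅mb0 i, ⁅mb0 i, mb0 j⁆⁆ ((-(A.d i : ℂ)) • mb0 j)
  | serre2 (i j : I) (hc : A.c i j = -2) :
      MinRel A ⁅mb0 i, ⁅mb0 i, ⁅mb0 i, mb0 j⁆⁆⁆ (((-4 : ℂ) * (A.d i : ℂ)) • ⁅mb0 i, mb0 j⁆)
  | serre3 (i j : I) (hc : A.c i j = -3) :
      MinRel A ⁅mb0 i, ⁅mb0 i, ⁅mb0 i, ⁅mb0 i, mb0 j⁆⁆⁆⁆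
        (((-10 : ℂ) * (A.d i : ℂ)) • ⁅mb0 i, ⁅mb0 i, mb0 j⁆⁆
          + ((-9 : ℂ) * (A.d i : ℂ) ^ 2) • mb0 j)

/-- The relations of `ᵢY^min` together with the additional relation
`[h_{i₀,1},[b_{i₀,1},[h_{i₀,1},b_{i₀,1}]]] = (α_{i₀},α_{i₀})² [b_{i₀,1}², h_{i₀,1}]`. -/
inductive MinRelP (A : CartanData I) (i₀ : I) :
    FreeAlgebra ℂ (MinGen I) → FreeAlgebra ℂ (MinGen I) → Prop
  | base {x y : FreeAlgebra ℂ (MinGen I)} : MinRel A x y → MinRelP A i₀ x y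
  | extra : MinRelP A i₀ ⁅mh i₀, ⁅mb1 i₀, ⁅mh i₀, mb1 i₀⁆⁆⁆
      (((A.al i₀ i₀ : ℂ) ^ 2) • ⁅mb1 i₀ * mb1 i₀, mh i₀⁆)

/-- Defining relations of the algebra `𝒰`. -/
inductive URel (A : CartanData I) : FreeAlgebra ℂ (MinGen I) → FreeAlgebra ℂ (MinGen I) → Prop
  | hh (i j : I) : URel A ⁅mh i, mh j⁆ 0
  | hb (i j : I) : URel A ⁅mh i, mb0 j⁆ ((2 * (A.al i j : ℂ)) • mb1 j)
  | bb (i j : I) :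
      URel A ⁅mb1 i, mb0 j⁆ (⁅mb0 i, mb1 j⁆ - (if i = j then (2 : ℂ) else 0) • mh i)
  | serre0 (i j : I) (hc : A.c i j = 0) : URel A ⁅mb0 i, mb0 j⁆ 0
  | serre1 (i j : I) (hc : A.c i j = -1) :
      URel A ⁅mb0 i, ⁅mb0 i, mb0 j⁆⁆ ((-(A.d i : ℂ)) • mb0 j)
  | serre2 (i j : I) (hc : A.c i j = -2) :
      URel A ⁅mb0 i, ⁅mb0 i, ⁅mb0 i, mb0 j⁆⁆⁆ (((-4 : ℂ) * (A.d i : ℂ)) • ⁅mb0 i, mb0 j⁆)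
  | serre3 (i j : I) (hc : A.c i j = -3) :
      URel A ⁅mb0 i, ⁅mb0 i, ⁅mb0 i, ⁅mb0 i, mb0 j⁆⁆⁆⁆
        (((-10 : ℂ) * (A.d i : ℂ)) • ⁅mb0 i, ⁅mb0 i, mb0 j⁆⁆
          + ((-9 : ℂ) * (A.d i : ℂ) ^ 2) • mb0 j)

/-- The relations of `𝒰` together with the additional relation
`[h_{i₀,1},[b_{i₀,1},[h_{i₀,1},b_{i₀,1}]]] = 0`. -/
inductive URelP (A : CartanData I) (i₀ : I) :
    FreeAlgebra ℂ (MinGen I) → FreeAlgebra ℂ (MinGen I) → Prop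
  | base {x y : FreeAlgebra ℂ (MinGen I)} : URel A x y → URelP A i₀ x y
  | extra : URelP A i₀ ⁅mh i₀, ⁅mb1 i₀, ⁅mh i₀, mb1 i₀⁆⁆⁆ 0

/-- The algebra `𝒰`. -/
abbrev UAlg (A : CartanData I) : Type := RingQuot (URel A)

/-- The generator `h_{i,1}` of `𝒰`. -/
def uH1 (A : CartanData I) (i : I) : UAlg A := RingQuot.mkAlgHom ℂ (URel A) (mh i)

/-- The generator `b_{i,0}` of `𝒰`. -/
def uB0 (A : CartanData I) (i : I) : UAlg A := RingQuot.mkAlgHom ℂ (URel A) (mb0 i)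

/-- The generator `b_{i,1}` of `𝒰`. -/
def uB1 (A : CartanData I) (i : I) : UAlg A := RingQuot.mkAlgHom ℂ (URel A) (mb1 i)

/-- The elements `b_{i,r}` of `𝒰`, defined recursively by
`b_{i,r+1} := (2(α_i,α_i))⁻¹ [h_{i,1}, b_{i,r}]` for `r ≥ 1`. -/
def uB (A : CartanData I) (i : I) : ℕ → UAlg A
  | 0 => uB0 A i
  | 1 => uB1 A i
  | r + 2 => (2 * (A.al i i : ℂ))⁻¹ • ⁅uH1 A i, uB A i (r + 1)⁆

/-- The elements `h_{i,r}` of `𝒰`: `h_{i,0} := 0`, `h_{i,1}` is the generator, and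
`h_{i,r+1} := [b_{i,0}, b_{i,r+1}]` for `r ≥ 1`. -/
def uH (A : CartanData I) (i : I) : ℕ → UAlg A
  | 0 => 0
  | 1 => uH1 A i
  | r + 2 => ⁅uB0 A i, uB A i (r + 2)⁆

end MinAlgebras

section AuxProof

variable {I : Type} [Fintype I] [DecidableEq I] (A : CartanData I)

attribute [local instance 100] LieRing.ofAssociativeRing

private lemma smul_cancel' {M : Type*} [AddCommGroup M] [Module ℂ M] {c : ℂ} (hc : c ≠ 0)
    {x y : M} (h : c • x = c • y) : x = y := by
  have := congrArg (fun z => c⁻¹ • z) h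
  simpa [smul_smul, inv_mul_cancel₀ hc] using this

private lemma smul_zero_cancel {M : Type*} [AddCommGroup M] [Module ℂ M] {c : ℂ} (hc : c ≠ 0)
    {x : M} (h : c • x = 0) : x = 0 :=
  smul_cancel' hc (by rw [h, smul_zero])

private lemma solve2 {M : Type*} [AddCommGroup M] [Module ℂ M] {a b c d : ℂ} {X Y : M}
    (h1 : a • X + b • Y = 0) (h2 : c • X + d • Y = 0) (hdet : a * d - b * c ≠ 0) :
    X = 0 ∧ Y = 0 := by
  constructor
  · refine smul_zero_cancel hdet ?_
    have : (a * d - b * c) • X = d • (a • X + b • Y) - b • (c • X + d • Y) := by module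
    rw [this, h1, h2, smul_zero, smul_zero, sub_zero]
  · refine smul_zero_cancel hdet ?_
    have : (a * d - b * c) • Y = a • (c • X + d • Y) - c • (a • X + b • Y) := by module
    rw [this, h1, h2, smul_zero, smul_zero, sub_zero]

lemma al_symm (i j : I) : A.al i j = A.al j i := A.d_symm i j

lemma al_self_pos (i : I) : 0 < A.al i i := by
  have := A.d_pos i
  simp only [CartanData.al, A.c_diag i]
  push_cast
  nlinarith

lemma al_self_ne (i : I) : (2 * (A.al i i : ℂ)) ≠ 0 := by
  have h : (A.al i i : ℂ) ≠ 0 := by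
    exact_mod_cast (al_self_pos A i).ne'
  exact mul_ne_zero two_ne_zero h

lemma det_pos (i j : I) (h : i ≠ j) :
    0 < A.al i i * A.al j j - A.al i j * A.al i j := by
  have hdi := A.d_pos i; have hdj := A.d_pos j
  have hs := A.d_symm i j
  have hb : ((A.c i j : ℝ)) * ((A.c j i : ℝ)) ≤ 3 := by exact_mod_cast A.c_bound i j h
  have key : A.al i j * A.al i j = (A.d i * A.d j) * ((A.c i j : ℝ) * (A.c j i : ℝ)) := by
    simp only [CartanData.al]
    nth_rewrite 2 [hs]
    ring
  have key2 : A.al i i * A.al j j = 4 * (A.d i * A.d j) := by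
    simp only [CartanData.al, A.c_diag i, A.c_diag j]
    push_cast; ring
  rw [key, key2]
  nlinarith [mul_pos hdi hdj, mul_nonneg (mul_pos hdi hdj).le (by linarith : (0:ℝ) ≤ 3 - (A.c i j : ℝ) * (A.c j i : ℝ))]

lemma det_ne (i j : I) (h : i ≠ j) :
    (2 * (A.al i i : ℂ)) * (2 * (A.al j j : ℂ)) - (2 * (A.al i j : ℂ)) * (2 * (A.al i j : ℂ)) ≠ 0 := by
  have h4 : (2 * (A.al i i : ℂ)) * (2 * (A.al j j : ℂ)) - (2 * (A.al i j : ℂ)) * (2 * (A.al i j : ℂ))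
      = 4 * ((A.al i i * A.al j j - A.al i j * A.al i j : ℝ) : ℂ) := by
    push_cast; ring
  rw [h4]
  refine mul_ne_zero (by norm_num) ?_
  exact_mod_cast (det_pos A i j h).ne'

private lemma lie_smulC (t : ℂ) (x y : UAlg A) : ⁅x, t • y⁆ = t • ⁅x, y⁆ := lie_smul t x y

private lemma smul_lieC (t : ℂ) (x y : UAlg A) : ⁅t • x, y⁆ = t • ⁅x, y⁆ := smul_lie t x y

private lemma map_lie' (x y : FreeAlgebra ℂ (MinGen I)) :
    RingQuot.mkAlgHom ℂ (URel A) ⁅x, y⁆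
      = ⁅RingQuot.mkAlgHom ℂ (URel A) x, RingQuot.mkAlgHom ℂ (URel A) y⁆ := by
  simp [Ring.lie_def, map_sub, map_mul]

lemma uB_zero (i : I) : uB A i 0 = uB0 A i := rfl
lemma uB_one (i : I) : uB A i 1 = uB1 A i := rfl
lemma uB_succ (i : I) (r : ℕ) :
    uB A i (r + 2) = (2 * (A.al i i : ℂ))⁻¹ • ⁅uH1 A i, uB A i (r + 1)⁆ := rfl

lemma lie_hh (i j : I) : ⁅uH1 A i, uH1 A j⁆ = 0 := by
  have := RingQuot.mkAlgHom_rel ℂ (URel.hh (A := A) i j)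
  rw [map_lie'] at this
  simpa [uH1] using this

lemma lie_hb0 (i j : I) : ⁅uH1 A i, uB A j 0⁆ = (2 * (A.al i j : ℂ)) • uB A j 1 := by
  have := RingQuot.mkAlgHom_rel ℂ (URel.hb (A := A) i j)
  rw [map_lie', map_smul] at this
  simpa [uH1, uB_zero, uB_one, uB0, uB1] using this

lemma lie_hb_self (i : I) (r : ℕ) :
    ⁅uH1 A i, uB A i r⁆ = (2 * (A.al i i : ℂ)) • uB A i (r + 1) := by
  cases r with
  | zero => exact lie_hb0 A i i
  | succ r =>
    rw [uB_succ, smul_smul, mul_inv_cancel₀ (al_self_ne A i), one_smul]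

lemma lie_hb (k l : I) (r : ℕ) :
    ⁅uH1 A k, uB A l r⁆ = (2 * (A.al k l : ℂ)) • uB A l (r + 1) := by
  induction r with
  | zero => exact lie_hb0 A k l
  | succ r ih =>
    refine smul_cancel' (al_self_ne A l) ?_
    calc (2 * (A.al l l : ℂ)) • ⁅uH1 A k, uB A l (r + 1)⁆
        = ⁅uH1 A k, (2 * (A.al l l : ℂ)) • uB A l (r + 1)⁆ := (lie_smul _ _ _).symm
      _ = ⁅uH1 A k, ⁅uH1 A l, uB A l r⁆⁆ := by rw [← lie_hb_self]
      _ = ⁅⁅uH1 A k, uH1 A l⁆, uB A l r⁆ + ⁅uH1 A l, ⁅uH1 A k, uB A l r⁆⁆ := leibniz_lie _ _ _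
      _ = ⁅uH1 A l, (2 * (A.al k l : ℂ)) • uB A l (r + 1)⁆ := by
          rw [lie_hh, ih, zero_lie, zero_add]
      _ = (2 * (A.al k l : ℂ)) • ((2 * (A.al l l : ℂ)) • uB A l (r + 2)) := by
          rw [lie_smulC, lie_hb_self]
      _ = (2 * (A.al l l : ℂ)) • ((2 * (A.al k l : ℂ)) • uB A l (r + 2)) := smul_comm _ _ _

lemma lie_expand (k l : I) (p : ℕ) (m : I) (q : ℕ) :
    ⁅uH1 A k, ⁅uB A l p, uB A m q⁆⁆
      = (2 * (A.al k l : ℂ)) • ⁅uB A l (p + 1), uB A m q⁆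
        + (2 * (A.al k m : ℂ)) • ⁅uB A l p, uB A m (q + 1)⁆ := by
  rw [leibniz_lie, lie_hb, lie_hb, smul_lieC, lie_smulC]

lemma lie_bb_ne (i j : I) (h : i ≠ j) :
    ⁅uB A i 1, uB A j 0⁆ = ⁅uB A i 0, uB A j 1⁆ := by
  have := RingQuot.mkAlgHom_rel ℂ (URel.bb (A := A) i j)
  rw [map_lie', map_sub, map_lie', map_smul] at this
  simpa [uB_zero, uB_one, uB0, uB1, if_neg h] using this

lemma lie_b0b1 (i : I) : ⁅uB A i 0, uB A i 1⁆ = uH1 A i := by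
  have h := RingQuot.mkAlgHom_rel ℂ (URel.bb (A := A) i i)
  rw [map_lie', map_sub, map_lie', map_smul] at h
  simp only [if_pos rfl] at h
  have h' : ⁅uB A i 1, uB A i 0⁆
      = ⁅uB A i 0, uB A i 1⁆ - (2 : ℂ) • uH1 A i := by
    simpa [uB_zero, uB_one, uB0, uB1, uH1] using h
  have hskew : ⁅uB A i 1, uB A i 0⁆ = -⁅uB A i 0, uB A i 1⁆ := (lie_skew _ _).symm
  refine (smul_cancel' (two_ne_zero (α := ℂ)) ?_).symm
  linear_combination (norm := module) h' - hskew

lemma lie_b0b2 (i : I) : ⁅uB A i 0, uB A i 2⁆ = 0 := by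
  have h : ⁅uH1 A i, ⁅uB A i 0, uB A i 1⁆⁆ = 0 := by
    rw [lie_b0b1]; exact lie_self _
  rw [lie_expand] at h
  refine smul_zero_cancel (al_self_ne A i) ?_
  simpa [lie_self] using h

lemma lie_b2b1 (i : I) : ⁅uB A i 2, uB A i 1⁆ = ⁅uB A i 0, uB A i 3⁆ := by
  have h : ⁅uH1 A i, ⁅uB A i 0, uB A i 2⁆⁆ = 0 := by
    rw [lie_b0b2]; exact lie_zero _
  rw [lie_expand] at h
  have hsum : ⁅uB A i 1, uB A i 2⁆ + ⁅uB A i 0, uB A i 3⁆ = 0 := by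
    refine smul_zero_cancel (al_self_ne A i) ?_
    rw [smul_add]
    exact h
  rw [← lie_skew (uB A i 2) (uB A i 1)]
  rw [add_comm] at hsum
  exact neg_eq_of_add_eq_zero_left hsum

lemma shift_step (i j : I) (hij : i ≠ j) (r s : ℕ)
    (h : ⁅uB A i (r + 1), uB A j s⁆ = ⁅uB A i r, uB A j (s + 1)⁆) :
    ⁅uB A i (r + 2), uB A j s⁆ = ⁅uB A i (r + 1), uB A j (s + 1)⁆ ∧
      ⁅uB A i (r + 1), uB A j (s + 1)⁆ = ⁅uB A i r, uB A j (s + 2)⁆ := by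
  set X1 := ⁅uB A i (r + 2), uB A j s⁆ with hX1
  set X2 := ⁅uB A i (r + 1), uB A j (s + 1)⁆ with hX2
  set X3 := ⁅uB A i r, uB A j (s + 2)⁆ with hX3
  have E1 : (2 * (A.al i i : ℂ)) • X1 + (2 * (A.al i j : ℂ)) • X2
      = (2 * (A.al i i : ℂ)) • X2 + (2 * (A.al i j : ℂ)) • X3 := by
    have := congrArg (fun z => ⁅uH1 A i, z⁆) h
    simpa [lie_expand] using this
  have E2 : (2 * (A.al i j : ℂ)) • X1 + (2 * (A.al j j : ℂ)) • X2
      = (2 * (A.al i j : ℂ)) • X2 + (2 * (A.al j j : ℂ)) • X3 := by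
    have := congrArg (fun z => ⁅uH1 A j, z⁆) h
    simpa [lie_expand, al_symm A j i] using this
  have h1 : (2 * (A.al i i : ℂ)) • (X1 - X2) + (2 * (A.al i j : ℂ)) • (X2 - X3) = 0 := by
    linear_combination (norm := module) E1
  have h2 : (2 * (A.al i j : ℂ)) • (X1 - X2) + (2 * (A.al j j : ℂ)) • (X2 - X3) = 0 := by
    linear_combination (norm := module) E2
  have hdet : (2 * (A.al i i : ℂ)) * (2 * (A.al j j : ℂ))
      - (2 * (A.al i j : ℂ)) * (2 * (A.al i j : ℂ)) ≠ 0 := det_ne A i j hij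
  obtain ⟨hP, hQ⟩ := solve2 h1 h2 hdet
  exact ⟨sub_eq_zero.mp hP, sub_eq_zero.mp hQ⟩

lemma shift (i j : I) (hij : i ≠ j) (r : ℕ) :
    ∀ s : ℕ, ⁅uB A i (r + 1), uB A j s⁆ = ⁅uB A i r, uB A j (s + 1)⁆ := by
  induction r with
  | zero =>
    intro s
    induction s with
    | zero => exact lie_bb_ne A i j hij
    | succ s ih => exact (shift_step A i j hij 0 s ih).2
  | succ r ih =>
    intro s
    exact (shift_step A i j hij r s (ih s)).1

lemma shift2 (i j : I) (hij : i ≠ j) (s : ℕ) :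
    ⁅uB A i 2, uB A j s⁆ = ⁅uB A i 0, uB A j (s + 2)⁆ := by
  rw [show (2 : ℕ) = 1 + 1 from rfl, shift A i j hij 1 s, shift A i j hij 0 (s + 1)]

end AuxProof

/-- in `𝒰`, for `i ≠ j`, `[h_{i,3}, b_{j,r}] = 2(α_i,α_j) b_{j,r+3}`. -/
theorem U_h3_b_bracket
    {I : Type} [Fintype I] [DecidableEq I] [Nonempty I] (A : CartanData I)
    (i j : I) (hne : i ≠ j) (r : ℕ) :
    ⁅uH A i 3, uB A j r⁆ = (2 * (A.al i j : ℂ)) • uB A j (r + 3) := by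
  letI : LieRing (UAlg A) := LieRing.ofAssociativeRing
  have hH3 : uH A i 3 = ⁅uB A i 2, uB A i 1⁆ := (lie_b2b1 A i).symm
  rw [hH3, lie_lie]
  rw [shift A i j hne 0 r, shift2 A i j hne r]
  have hA : ⁅uB A i 2, ⁅uB A i 0, uB A j (r + 1)⁆⁆
      = ⁅uB A i 0, ⁅uB A i 0, uB A j (r + 3)⁆⁆ := by
    have h0 : ⁅⁅uB A i 0, uB A i 2⁆, uB A j (r + 1)⁆ = 0 := by
      rw [lie_b0b2, zero_lie]
    rw [lie_lie] at h0
    have h1 := sub_eq_zero.mp h0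
    rw [← h1, shift2 A i j hne (r + 1)]
  have hB : ⁅uB A i 1, ⁅uB A i 0, uB A j (r + 2)⁆⁆
      = ⁅uB A i 0, ⁅uB A i 0, uB A j (r + 3)⁆⁆ - (2 * (A.al i j : ℂ)) • uB A j (r + 3) := by
    have h0 : ⁅⁅uB A i 0, uB A i 1⁆, uB A j (r + 2)⁆
        = (2 * (A.al i j : ℂ)) • uB A j (r + 3) := by
      rw [lie_b0b1, lie_hb]
    rw [lie_lie, shift A i j hne 0 (r + 2)] at h0
    simp only [show r + 2 + 1 = r + 3 from rfl] at h0
    linear_combination (norm := module) -h0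
  rw [hA, hB]
  abel
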